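/- Let λ be a nonzero real number, k ≥ 1 an integer, and t a real number with 1 + λt > 0, (1/λ)·log(1 + λt) < 1, and (1/λ)·log(1+λt) ≠ 0. Let (U_j)_{1≤j≤k} be i.i.d. uniform random variables on (0,1) and (X_j)_{1≤j≤k} be i.i.d. exponential random variables with parameter 1, all mutually independent, and set S_k = U₁X₁ + ⋯ + U_kX_k. Then E[e_λ^{S_k}(t)] = ( 1 / ((1/λ)·log(1+λt)) )^k · log^k( 1 / (1 − (1/λ)·log(1+λt)) ). -/

import Mathlib

open MeasureTheory ProbabilityTheory Finset Real

open scoped ENNReal NNReal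

lemma aux_exp_Ioi {d : ℝ} (hd : 0 < d) :
    ∫ x in Set.Ioi (0:ℝ), Real.exp (-(d * x)) = 1 / d := by
  have hderiv : ∀ x ∈ Set.Ioi (0:ℝ),
      HasDerivAt (fun x => -(Real.exp (-(d * x)) / d)) (Real.exp (-(d * x))) x := by
    intro x _
    have h1 : HasDerivAt (fun x : ℝ => -(d * x)) (-d) x := by
      simpa [Pi.neg_def] using ((hasDerivAt_id x).const_mul d).neg
    have h2 := (h1.exp.div_const d).neg
    convert h2 using 1
    · rfl
    · rfl
    · rfl
    · field_simp
  have hint : IntegrableOn (fun x => Real.exp (-(d * x))) (Set.Ioi 0) := by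
    simpa [mul_comm] using exp_neg_integrableOn_Ioi 0 hd
  have hcont : Continuous (fun x => -(Real.exp (-(d * x)) / d)) := by
    continuity
  have htend : Filter.Tendsto (fun x => -(Real.exp (-(d * x)) / d)) Filter.atTop (nhds 0) := by
    have h0 : Filter.Tendsto (fun x : ℝ => -(d * x)) Filter.atTop Filter.atBot := by
      have := (Filter.tendsto_id (α := ℝ)).const_mul_atTop hd
      exact Filter.tendsto_neg_atBot_iff.mpr this
    simpa using ((Real.tendsto_exp_atBot.comp h0).div_const d).neg
  have := integral_Ioi_of_hasDerivAt_of_tendsto hcont.continuousWithinAt hderiv hint htend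
  simpa using this

lemma aux_pdf_eq (x : ℝ) : gammaPDFReal 1 1 x = if 0 ≤ x then Real.exp (-x) else 0 := by
  unfold gammaPDFReal
  simp [Real.Gamma_one]

lemma aux_pdf_nonneg (x : ℝ) : 0 ≤ gammaPDFReal 1 1 x := by
  rw [aux_pdf_eq]; positivity

lemma aux_exp_integrable {b : ℝ} (hb : b < 1) :
    Integrable (fun x => Real.exp (b * x)) (expMeasure 1) := by
  rw [expMeasure, gammaMeasure]
  rw [integrable_withDensity_iff ((by exact (measurable_gammaPDFReal 1 1).ennreal_ofReal : Measurable (gammaPDF 1 1))) (Filter.Eventually.of_forall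
    (fun x => (by exact ENNReal.ofReal_lt_top : gammaPDF 1 1 x < ⊤)))]
  have heq : ∀ x : ℝ, Real.exp (b * x) * (gammaPDF 1 1 x).toReal
      = Set.indicator (Set.Ici (0:ℝ)) (fun x => Real.exp (-((1 - b) * x))) x := by
    intro x
    rw [gammaPDF, ENNReal.toReal_ofReal (aux_pdf_nonneg x), aux_pdf_eq]
    by_cases hx : 0 ≤ x
    · simp [hx, Set.indicator, ← Real.exp_add]
      ring_nf
    · simp [hx, Set.indicator]
  simp_rw [heq]
  rw [integrable_indicator_iff measurableSet_Ici]
  rw [integrableOn_Ici_iff_integrableOn_Ioi]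
  have h := exp_neg_integrableOn_Ioi 0 (by linarith : 0 < 1 - b)
  simpa only [neg_mul] using h

lemma aux_exp_integral {b : ℝ} (hb : b < 1) :
    ∫ x, Real.exp (b * x) ∂(expMeasure 1) = (1 - b)⁻¹ := by
  have hmeas : Measurable fun x : ℝ => (gammaPDFReal 1 1 x).toNNReal :=
    (measurable_gammaPDFReal 1 1).real_toNNReal
  have h0 : expMeasure 1 = volume.withDensity (fun x => ((gammaPDFReal 1 1 x).toNNReal : ℝ≥0∞)) := rfl
  rw [h0, integral_withDensity_eq_integral_smul hmeas]
  have heq : ∀ x : ℝ, (gammaPDFReal 1 1 x).toNNReal • Real.exp (b * x)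
      = Set.indicator (Set.Ici (0:ℝ)) (fun x => Real.exp (-((1 - b) * x))) x := by
    intro x
    rw [NNReal.smul_def, smul_eq_mul, Real.coe_toNNReal _ (aux_pdf_nonneg x), aux_pdf_eq]
    by_cases hx : 0 ≤ x
    · simp [hx, Set.indicator, ← Real.exp_add]
      ring_nf
    · simp [hx, Set.indicator]
  simp_rw [heq]
  rw [integral_indicator measurableSet_Ici, integral_Ici_eq_integral_Ioi,
    aux_exp_Ioi (by linarith : 0 < 1 - b), one_div]

lemma aux_pos {c : ℝ} (hc1 : c < 1) {u : ℝ} (hu0 : 0 ≤ u) (hu1 : u ≤ 1) :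
    0 < 1 - c * u := by
  rcases le_or_gt c 0 with hc | hc
  · nlinarith
  · nlinarith

lemma aux_outer {c : ℝ} (hc1 : c < 1) (hc0 : c ≠ 0) :
    ∫ u in Set.Ioo (0:ℝ) 1, (1 - c * u)⁻¹ = (1 / c) * Real.log (1 / (1 - c)) := by
  have hderiv : ∀ u ∈ Set.uIcc (0:ℝ) 1,
      HasDerivAt (fun u => -(1 / c) * Real.log (1 - c * u)) ((1 - c * u)⁻¹) u := by
    intro u hu
    rw [Set.uIcc_of_le zero_le_one] at hu
    have hpos : 0 < 1 - c * u := aux_pos hc1 hu.1 hu.2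
    have h1 : HasDerivAt (fun u : ℝ => 1 - c * u) (-c) u := by
      simpa using ((hasDerivAt_id u).const_mul c).const_sub 1
    have h2 := (h1.log hpos.ne').const_mul (-(1 / c))
    convert h2 using 1
    · rfl
    · rfl
    · field_simp
  have hcont : ContinuousOn (fun u : ℝ => (1 - c * u)⁻¹) (Set.uIcc 0 1) := by
    apply ContinuousOn.inv₀ (by fun_prop)
    intro u hu
    rw [Set.uIcc_of_le zero_le_one] at hu
    exact (aux_pos hc1 hu.1 hu.2).ne'
  have hii : IntervalIntegrable (fun u : ℝ => (1 - c * u)⁻¹) volume 0 1 :=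
    hcont.intervalIntegrable
  have key := intervalIntegral.integral_eq_sub_of_hasDerivAt hderiv hii
  rw [intervalIntegral.integral_of_le zero_le_one, MeasureTheory.integral_Ioc_eq_integral_Ioo] at key
  rw [key]
  rw [one_div (1 - c), Real.log_inv]
  simp

lemma aux_single {Ω : Type*} [MeasurableSpace Ω] (P : Measure Ω) [IsProbabilityMeasure P]
    {c : ℝ} (hc1 : c < 1) (hc0 : c ≠ 0) {V Y : Ω → ℝ} (hV : Measurable V) (hY : Measurable Y)
    (hind : IndepFun V Y P) (hmV : P.map V = volume.restrict (Set.Ioo 0 1))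
    (hmY : P.map Y = expMeasure 1) :
    Integrable (fun ω => Real.exp (c * (V ω * Y ω))) P ∧
      ∫ ω, Real.exp (c * (V ω * Y ω)) ∂P = (1 / c) * Real.log (1 / (1 - c)) := by
  have hνprob : IsProbabilityMeasure (expMeasure 1) := isProbabilityMeasure_expMeasure one_pos
  set μ := volume.restrict (Set.Ioo (0:ℝ) 1) with hμdef
  set ν := expMeasure 1 with hνdef
  have hpair : P.map (fun ω => (V ω, Y ω)) = μ.prod ν := by
    rw [← hmV, ← hmY]
    exact (indepFun_iff_map_prod_eq_prod_map_map hV.aemeasurable hY.aemeasurable).mp hind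
  set g : ℝ × ℝ → ℝ := fun p => Real.exp (c * (p.1 * p.2)) with hgdef
  have hg : Continuous g := by fun_prop
  have hcu : ∀ u ∈ Set.Ioo (0:ℝ) 1, c * u < 1 := by
    intro u hu
    have := aux_pos hc1 hu.1.le hu.2.le
    linarith
  have hinner : ∀ u ∈ Set.Ioo (0:ℝ) 1, ∫ x, g (u, x) ∂ν = (1 - c * u)⁻¹ := by
    intro u hu
    have : ∀ x : ℝ, g (u, x) = Real.exp ((c * u) * x) := by
      intro x; simp [hgdef]; ring_nf
    simp_rw [this]
    exact aux_exp_integral (hcu u hu)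
  have hinnerInt : ∀ u ∈ Set.Ioo (0:ℝ) 1, Integrable (fun x => g (u, x)) ν := by
    intro u hu
    have : ∀ x : ℝ, g (u, x) = Real.exp ((c * u) * x) := by
      intro x; simp [hgdef]; ring_nf
    simp_rw [this]
    exact aux_exp_integrable (hcu u hu)
  have houterInt : Integrable (fun u : ℝ => (1 - c * u)⁻¹) μ := by
    rw [hμdef]
    refine (ContinuousOn.integrableOn_compact isCompact_Icc ?_).mono_set
      Set.Ioo_subset_Icc_self
    apply ContinuousOn.inv₀ (by fun_prop)
    intro u hu
    exact (aux_pos hc1 hu.1 hu.2).ne'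
  have hgint : Integrable g (μ.prod ν) := by
    rw [integrable_prod_iff hg.aestronglyMeasurable]
    constructor
    · filter_upwards [ae_restrict_mem measurableSet_Ioo] with u hu
      exact hinnerInt u hu
    · apply houterInt.congr
      filter_upwards [ae_restrict_mem measurableSet_Ioo] with u hu
      rw [← hinner u hu]
      refine (integral_congr_ae (Filter.Eventually.of_forall fun x => ?_)).symm
      simp [hgdef, Real.norm_eq_abs, abs_of_pos (Real.exp_pos _)]
  have hprod : ∫ p, g p ∂(μ.prod ν) = (1 / c) * Real.log (1 / (1 - c)) := by
    rw [integral_prod _ hgint]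
    rw [← aux_outer hc1 hc0]
    apply integral_congr_ae
    filter_upwards [ae_restrict_mem measurableSet_Ioo] with u hu
    exact hinner u hu
  have hmeaspair : AEMeasurable (fun ω => (V ω, Y ω)) P := (hV.prodMk hY).aemeasurable
  constructor
  · have : Integrable g (P.map (fun ω => (V ω, Y ω))) := by rw [hpair]; exact hgint
    exact (integrable_map_measure hg.aestronglyMeasurable hmeaspair).mp this
  · have := integral_map hmeaspair hg.aestronglyMeasurable (f := g)
    rw [hpair, hprod] at this
    exact this.symm

lemma aux_iIndepFun_congr {Ω ι : Type*} [MeasurableSpace Ω] {μ : Measure Ω}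
    {β : Type*} [mβ : MeasurableSpace β] {f g : ι → Ω → β}
    (hf : iIndepFun (m := fun _ => mβ) f μ) (h : ∀ i, f i =ᵐ[μ] g i) :
    iIndepFun (m := fun _ => mβ) g μ := by
  rw [iIndepFun_iff_measure_inter_preimage_eq_mul] at hf ⊢
  intro S sets hmeas
  have hall : ∀ᵐ ω ∂μ, ∀ i ∈ S, f i ω = g i ω :=
    (MeasureTheory.ae_ball_iff S.countable_toSet).mpr (fun i _ => h i)
  have hseteq : (⋂ i ∈ S, f i ⁻¹' sets i : Set Ω) =ᵐ[μ] (⋂ i ∈ S, g i ⁻¹' sets i : Set Ω) := by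
    filter_upwards [hall] with ω hω
    show (ω ∈ ⋂ i ∈ S, f i ⁻¹' sets i) = (ω ∈ ⋂ i ∈ S, g i ⁻¹' sets i)
    simp only [Set.mem_iInter, Set.mem_preimage, eq_iff_iff]
    constructor
    · intro hmem j hj; rw [← hω j hj]; exact hmem j hj
    · intro hmem j hj; rw [hω j hj]; exact hmem j hj
  rw [← measure_congr hseteq, hf S hmeas]
  refine Finset.prod_congr rfl fun i hi => ?_
  refine measure_congr ?_
  filter_upwards [h i] with ω hω
  exact congrArg (· ∈ sets i) hω

lemma aux_prod {Ω : Type*} [MeasurableSpace Ω] (P : Measure Ω) [IsProbabilityMeasure P] {k : ℕ}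
    {V Y : Fin k → Ω → ℝ} (hV : ∀ j, Measurable (V j)) (hY : ∀ j, Measurable (Y j))
    (hindep : iIndepFun (m := fun _ : Fin k ⊕ Fin k => (inferInstance : MeasurableSpace ℝ))
      (Sum.elim V Y) P) (c : ℝ) (s : Finset (Fin k)) :
    ∫ ω, Real.exp (c * ∑ j ∈ s, V j ω * Y j ω) ∂P
      = ∏ j ∈ s, ∫ ω, Real.exp (c * (V j ω * Y j ω)) ∂P := by
  classical
  have hmeas : ∀ x : Fin k ⊕ Fin k, Measurable (Sum.elim V Y x) := by
    rintro (a | a)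
    · exact hV a
    · exact hY a
  induction' s using Finset.induction_on with i s hi ih
  · simp
  · rw [Finset.prod_insert hi, ← ih]
    have hdisj : Disjoint ({Sum.inl i, Sum.inr i} : Finset (Fin k ⊕ Fin k))
        ((s.image Sum.inl) ∪ (s.image Sum.inr)) := by
      simp only [Finset.disjoint_left, Finset.mem_insert, Finset.mem_singleton, Finset.mem_union,
        Finset.mem_image]
      rintro x (rfl | rfl) <;> rintro (⟨j, hj, hjx⟩ | ⟨j, hj, hjx⟩) <;>
        simp_all [Sum.inl.injEq, Sum.inr.injEq]
    have hfin := hindep.indepFun_finset ({Sum.inl i, Sum.inr i})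
      ((s.image Sum.inl) ∪ (s.image Sum.inr)) hdisj hmeas
    set S : Finset (Fin k ⊕ Fin k) := {Sum.inl i, Sum.inr i} with hS
    set T : Finset (Fin k ⊕ Fin k) := (s.image Sum.inl) ∪ (s.image Sum.inr) with hT
    have hiS1 : (Sum.inl i : Fin k ⊕ Fin k) ∈ S := by simp [hS]
    have hiS2 : (Sum.inr i : Fin k ⊕ Fin k) ∈ S := by simp [hS]
    have hjT1 : ∀ j ∈ s, (Sum.inl j : Fin k ⊕ Fin k) ∈ T := fun j hj =>
      Finset.mem_union_left _ (Finset.mem_image_of_mem _ hj)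
    have hjT2 : ∀ j ∈ s, (Sum.inr j : Fin k ⊕ Fin k) ∈ T := fun j hj =>
      Finset.mem_union_right _ (Finset.mem_image_of_mem _ hj)
    set φ : (S → ℝ) → ℝ := fun v => Real.exp (c * (v ⟨Sum.inl i, hiS1⟩ * v ⟨Sum.inr i, hiS2⟩))
      with hφ
    set ψ : (T → ℝ) → ℝ := fun v =>
      Real.exp (c * ∑ j ∈ s.attach, v ⟨Sum.inl j.1, hjT1 j.1 j.2⟩ * v ⟨Sum.inr j.1, hjT2 j.1 j.2⟩)
      with hψ
    have hφm : Measurable φ := by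
      apply Measurable.exp
      apply Measurable.const_mul
      exact (measurable_pi_apply (⟨Sum.inl i, hiS1⟩ : S)).mul
        (measurable_pi_apply (⟨Sum.inr i, hiS2⟩ : S))
    have hψm : Measurable ψ := by
      apply Measurable.exp
      apply Measurable.const_mul
      apply Finset.measurable_sum
      intro j _
      exact (measurable_pi_apply (⟨Sum.inl j.1, hjT1 j.1 j.2⟩ : T)).mul
        (measurable_pi_apply (⟨Sum.inr j.1, hjT2 j.1 j.2⟩ : T))
    have hind2 := hfin.comp hφm hψm
    have hA : (φ ∘ fun a (x : S) => Sum.elim V Y x a)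
        = fun ω => Real.exp (c * (V i ω * Y i ω)) := rfl
    have hB : (ψ ∘ fun a (x : T) => Sum.elim V Y x a)
        = fun ω => Real.exp (c * ∑ j ∈ s, V j ω * Y j ω) := by
      funext ω
      simp only [Function.comp_apply, hψ]
      congr 2
      rw [← Finset.sum_attach s (fun j => V j ω * Y j ω)]
      simp
    rw [hA, hB] at hind2
    have key := hind2.integral_mul_eq_mul_integral
      (by exact (((hV i).mul (hY i)).const_mul c).exp.aestronglyMeasurable)
      (by
        apply Measurable.aestronglyMeasurable
        exact ((Finset.measurable_sum _ fun j _ => (hV j).mul (hY j)).const_mul c).exp)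
    rw [← key]
    apply integral_congr_ae
    filter_upwards with ω
    rw [Finset.sum_insert hi, mul_add, Real.exp_add]
    rfl

/-- **Equation (12).** Let `λ ≠ 0`, `k ≥ 1`, and let `t` be real with `1 + λt > 0`,
`(1/λ)·log(1+λt) < 1` and `(1/λ)·log(1+λt) ≠ 0`. Let `U₁, …, U_k` be i.i.d. uniform random
variables on `(0,1)` and `X₁, …, X_k` i.i.d. exponential random variables with parameter `1`,
all mutually independent, and `S_k = U₁X₁ + ⋯ + U_kX_k`. Then, with
`e_λ^x(t) = (1+λt)^{x/λ}`, one has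
`E[e_λ^{S_k}(t)] = (1/((1/λ)·log(1+λt)))^k · log^k(1/(1-(1/λ)·log(1+λt)))`. -/
theorem expectation_deg_exp_Sk
    {Ω : Type*} [MeasurableSpace Ω] (P : Measure Ω) [IsProbabilityMeasure P]
    (lam : ℝ) (hlam : lam ≠ 0) (k : ℕ) (hk : 1 ≤ k) (t : ℝ)
    (h1 : 0 < 1 + lam * t) (h2 : (1 / lam) * Real.log (1 + lam * t) < 1)
    (h3 : (1 / lam) * Real.log (1 + lam * t) ≠ 0)
    (U X : Fin k → Ω → ℝ)
    (hindep : iIndepFun (m := fun _ : Fin k ⊕ Fin k => (inferInstance : MeasurableSpace ℝ))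
      (Sum.elim U X) P)
    (hU : ∀ j, Measure.map (U j) P = volume.restrict (Set.Ioo (0 : ℝ) 1))
    (hX : ∀ j, Measure.map (X j) P = expMeasure 1) :
    ∫ ω, (1 + lam * t) ^ ((∑ j, U j ω * X j ω) / lam) ∂P =
      (1 / ((1 / lam) * Real.log (1 + lam * t))) ^ k *
        (Real.log (1 / (1 - (1 / lam) * Real.log (1 + lam * t)))) ^ k := by
  have hνprob : IsProbabilityMeasure (expMeasure 1) := isProbabilityMeasure_expMeasure one_pos
  set c : ℝ := Real.log (1 + lam * t) / lam with hcdef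
  have hc_eq : (1 / lam) * Real.log (1 + lam * t) = c := by rw [hcdef]; ring
  have hc1 : c < 1 := by rw [← hc_eq]; exact h2
  have hc0 : c ≠ 0 := by rw [← hc_eq]; exact h3
  -- a.e. measurability
  have hUm : ∀ j, AEMeasurable (U j) P := by
    intro j
    by_contra h
    have h' := hU j
    rw [Measure.map_of_not_aemeasurable h] at h'
    have := congrArg (fun m : Measure ℝ => m Set.univ) h'
    simp [Measure.restrict_apply, Real.volume_Ioo] at this
  have hXm : ∀ j, AEMeasurable (X j) P := by
    intro j
    by_contra h
    have h' := hX j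
    rw [Measure.map_of_not_aemeasurable h] at h'
    have := congrArg (fun m : Measure ℝ => m Set.univ) h'
    simp at this
  -- measurable modifications
  set V : Fin k → Ω → ℝ := fun j => (hUm j).mk (U j) with hVdef
  set W : Fin k → Ω → ℝ := fun j => (hXm j).mk (X j) with hWdef
  have hVmeas : ∀ j, Measurable (V j) := fun j => (hUm j).measurable_mk
  have hWmeas : ∀ j, Measurable (W j) := fun j => (hXm j).measurable_mk
  have hVae : ∀ j, U j =ᵐ[P] V j := fun j => (hUm j).ae_eq_mk
  have hWae : ∀ j, X j =ᵐ[P] W j := fun j => (hXm j).ae_eq_mk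
  have hVmap : ∀ j, Measure.map (V j) P = volume.restrict (Set.Ioo (0 : ℝ) 1) := fun j => by
    rw [← Measure.map_congr (hVae j)]; exact hU j
  have hWmap : ∀ j, Measure.map (W j) P = expMeasure 1 := fun j => by
    rw [← Measure.map_congr (hWae j)]; exact hX j
  have hsumae : ∀ i : Fin k ⊕ Fin k, Sum.elim U X i =ᵐ[P] Sum.elim V W i := by
    rintro (a | a)
    · exact hVae a
    · exact hWae a
  have hindep2 : iIndepFun (m := fun _ : Fin k ⊕ Fin k => (inferInstance : MeasurableSpace ℝ))
      (Sum.elim V W) P := aux_iIndepFun_congr hindep hsumae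
  -- rewrite the integrand
  have hLHS : ∫ ω, (1 + lam * t) ^ ((∑ j, U j ω * X j ω) / lam) ∂P
      = ∫ ω, Real.exp (c * ∑ j, V j ω * W j ω) ∂P := by
    apply integral_congr_ae
    have hall : ∀ᵐ ω ∂P, ∀ j : Fin k, U j ω = V j ω ∧ X j ω = W j ω := by
      rw [ae_all_iff]
      intro j
      filter_upwards [hVae j, hWae j] with ω h1 h2 using ⟨h1, h2⟩
    filter_upwards [hall] with ω hω
    have hs : (∑ j, U j ω * X j ω) = ∑ j, V j ω * W j ω := by
      refine Finset.sum_congr rfl fun j _ => ?_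
      rw [(hω j).1, (hω j).2]
    rw [hs, Real.rpow_def_of_pos h1, hcdef]
    ring_nf
  rw [hLHS]
  rw [aux_prod P hVmeas hWmeas hindep2 c Finset.univ]
  have hsingle : ∀ j : Fin k, ∫ ω, Real.exp (c * (V j ω * W j ω)) ∂P
      = (1 / c) * Real.log (1 / (1 - c)) := by
    intro j
    have hij : (Sum.inl j : Fin k ⊕ Fin k) ≠ Sum.inr j := by simp
    have hind := hindep2.indepFun hij
    exact (aux_single P hc1 hc0 (hVmeas j) (hWmeas j) hind (hVmap j) (hWmap j)).2
  rw [Finset.prod_congr rfl fun j _ => hsingle j]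
  rw [Finset.prod_const, hc_eq]
  simp only [Finset.card_univ, Fintype.card_fin, mul_pow]
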